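/- The group generated by the matrices S_a = [[-1, 0], [τ, 1]] and S_b = [[1, τ], [0, -1]] (over ℝ, τ the golden ratio) has order 10 and is isomorphic to the dihedral group D₅. -/

import Mathlib

theorem generated_group_is_dihedral_five
    (τ : ℝ) (hτ : τ = (1 + Real.sqrt 5) / 2)
    (Sa Sb : GL (Fin 2) ℝ)
    (hSa : (Sa : Matrix (Fin 2) (Fin 2) ℝ) = !![-1, 0; τ, 1])
    (hSb : (Sb : Matrix (Fin 2) (Fin 2) ℝ) = !![1, τ; 0, -1]) :
    Nat.card (Subgroup.closure {Sa, Sb} : Subgroup (GL (Fin 2) ℝ)) = 10 ∧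
    Nonempty ((Subgroup.closure {Sa, Sb} : Subgroup (GL (Fin 2) ℝ)) ≃* DihedralGroup 5) := by
  have hz : ∀ a b : ZMod 5, 4 * a + b = b - a := by decide
  have fact5 : Fact (Nat.Prime 5) := ⟨by norm_num⟩
  have hτ2 : τ^2 = τ + 1 := by
    rw [hτ]
    have h5 : Real.sqrt 5 ^ 2 = 5 := Real.sq_sqrt (by norm_num)
    ring_nf
    nlinarith [h5]
  set A : GL (Fin 2) ℝ := Sa * Sb with hA
  set B : GL (Fin 2) ℝ := Sa with hB
  -- matrix of A
  have hAval : (A : Matrix (Fin 2) (Fin 2) ℝ) = !![-1, -τ; τ, τ] := by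
    show ((Sa * Sb : GL (Fin 2) ℝ) : Matrix (Fin 2) (Fin 2) ℝ) = _
    rw [Units.val_mul, hSa, hSb]
    ext i j
    fin_cases i <;> fin_cases j <;> simp [Matrix.mul_fin_two] <;> nlinarith [hτ2]
  -- relations
  have hB2 : B * B = 1 := by
    apply Units.ext
    rw [Units.val_mul, hSa, Units.val_one]
    ext i j
    fin_cases i <;> fin_cases j <;> simp [Matrix.mul_fin_two, Matrix.one_fin_two]
  have hSb2 : Sb * Sb = 1 := by
    apply Units.ext
    rw [Units.val_mul, hSb, Units.val_one]
    ext i j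
    fin_cases i <;> fin_cases j <;> simp [Matrix.mul_fin_two, Matrix.one_fin_two]
  have hA5 : A ^ 5 = 1 := by
    apply Units.ext
    rw [Units.val_pow_eq_pow_val, Units.val_one, hAval]
    have h3 : τ^3 = 2*τ + 1 := by linear_combination (τ+1)*hτ2
    have h4 : τ^4 = 3*τ + 2 := by linear_combination (τ^2+τ+2)*hτ2
    have h5 : τ^5 = 5*τ + 3 := by linear_combination (τ^3+τ^2+2*τ+3)*hτ2
    ext i j
    fin_cases i <;> fin_cases j <;>
      simp [pow_succ, Matrix.mul_fin_two, Matrix.one_fin_two] <;> ring_nf <;>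
      linarith [h3, h4, h5, hτ2]
  have hAne : A ≠ 1 := by
    intro h
    have := congrArg (fun x : GL (Fin 2) ℝ => (x : Matrix (Fin 2) (Fin 2) ℝ) 0 0) h
    simp only [hAval] at this
    norm_num [Matrix.one_apply] at this
  have hord : orderOf A = 5 := orderOf_eq_prime hA5 hAne
  -- A * B = B * A^4
  have hABone : A * B = B * A ^ 4 := by
    have hAinv : A ^ 4 = A⁻¹ := by
      have : A ^ 4 * A = 1 := by rw [← pow_succ]; exact hA5
      exact eq_inv_of_mul_eq_one_left this
    rw [hAinv, hA, hB, mul_inv_rev]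
    have hSbinv : Sb⁻¹ = Sb := inv_eq_of_mul_eq_one_left hSb2
    have hSainv : Sa⁻¹ = Sa := inv_eq_of_mul_eq_one_left hB2
    rw [hSbinv, hSainv]
    group
  have hABpow : ∀ k : ℕ, A ^ k * B = B * A ^ (4 * k) := by
    intro k
    induction k with
    | zero => simp
    | succ n ih =>
      rw [pow_succ, mul_assoc, hABone, ← mul_assoc, ih, mul_assoc, ← pow_add]
      ring_nf
  -- powers of A depend only on exponent mod 5
  have hpow : ∀ m n : ℕ, (m : ZMod 5) = (n : ZMod 5) → A ^ m = A ^ n := by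
    intro m n h
    have hmod : m % 5 = n % 5 := by
      rwa [ZMod.natCast_eq_natCast_iff, Nat.ModEq] at h
    have key : ∀ k : ℕ, A ^ k = A ^ (k % 5) := by
      intro k
      conv_lhs => rw [← Nat.mod_add_div k 5]
      rw [pow_add, pow_mul, hA5, one_pow, mul_one]
    rw [key m, key n, hmod]
  have hvc : ∀ i : ZMod 5, ((i.val : ℕ) : ZMod 5) = i := by
    intro i
    rw [ZMod.natCast_val, ZMod.cast_id]
  -- the homomorphism
  let f : DihedralGroup 5 →* GL (Fin 2) ℝ :=
  { toFun := fun x => match x with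
      | .r i => A ^ i.val
      | .sr i => B * A ^ i.val
    map_one' := by
      show A ^ (0 : ZMod 5).val = 1
      simp [ZMod.val_zero]
    map_mul' := by
      rintro (i | i) (j | j)
      · show A ^ (i + j).val = A ^ i.val * A ^ j.val
        rw [← pow_add]
        exact hpow _ _ (by push_cast [hvc]; ring)
      · show B * A ^ (j - i).val = A ^ i.val * (B * A ^ j.val)
        rw [← mul_assoc, hABpow, mul_assoc, ← pow_add]
        congr 1
        refine (hpow _ _ ?_).symm
        push_cast [hvc]
        exact hz i j
      · show B * A ^ (i + j).val = B * A ^ i.val * A ^ j.val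
        rw [mul_assoc, ← pow_add]
        congr 1
        exact hpow _ _ (by push_cast [hvc]; ring)
      · show A ^ (j - i).val = B * A ^ i.val * (B * A ^ j.val)
        rw [mul_assoc, ← mul_assoc (A ^ i.val), hABpow, ← mul_assoc, ← mul_assoc,
          hB2, one_mul, ← pow_add]
        refine (hpow _ _ ?_).symm
        push_cast [hvc]
        exact hz i j }
  -- determinants
  have hdetA : Matrix.GeneralLinearGroup.det A = 1 := by
    apply Units.ext
    show Matrix.det (A : Matrix (Fin 2) (Fin 2) ℝ) = 1
    rw [hAval, Matrix.det_fin_two_of]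
    nlinarith [hτ2]
  have hdetB : Matrix.GeneralLinearGroup.det B = -1 := by
    apply Units.ext
    show Matrix.det (B : Matrix (Fin 2) (Fin 2) ℝ) = ((-1 : ℝˣ) : ℝ)
    rw [hSa, Matrix.det_fin_two_of]
    norm_num
  -- injectivity
  have hinj : Function.Injective f := by
    rw [injective_iff_map_eq_one]
    rintro (i | i) h
    · have h' : A ^ i.val = 1 := h
      have hdvd : 5 ∣ i.val := by
        have := orderOf_dvd_of_pow_eq_one h'
        rwa [hord] at this
      have hlt : i.val < 5 := i.val_lt
      have hv0 : i.val = 0 := by omega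
      have : i = 0 := (ZMod.val_eq_zero i).mp hv0
      rw [this, ← DihedralGroup.one_def]
    · exfalso
      have h' : B * A ^ i.val = 1 := h
      have hd := congrArg Matrix.GeneralLinearGroup.det h'
      rw [map_mul, map_pow, hdetA, hdetB, one_pow, mul_one, map_one] at hd
      have : ((-1 : ℝˣ) : ℝ) = ((1 : ℝˣ) : ℝ) := by rw [hd]
      norm_num at this
  -- range equals closure
  have hAmem : A ∈ Subgroup.closure {Sa, Sb} :=
    mul_mem (Subgroup.subset_closure (by simp)) (Subgroup.subset_closure (by simp))
  have hBmem : B ∈ Subgroup.closure {Sa, Sb} := Subgroup.subset_closure (by simp [hB])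
  have hSamem : Sa ∈ f.range := by
    refine ⟨DihedralGroup.sr 0, ?_⟩
    show B * A ^ (0 : ZMod 5).val = Sa
    simp [ZMod.val_zero, hB]
  have hSbmem : Sb ∈ f.range := by
    refine ⟨DihedralGroup.sr 1, ?_⟩
    show B * A ^ (1 : ZMod 5).val = Sb
    have h1 : (1 : ZMod 5).val = 1 := rfl
    rw [h1, pow_one, hB, hA, ← mul_assoc]
    rw [show Sa * Sa = 1 from hB2, one_mul]
  have hrange : f.range = Subgroup.closure {Sa, Sb} := by
    apply le_antisymm
    · rintro x ⟨(i | i), rfl⟩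
      · exact pow_mem hAmem _
      · exact mul_mem hBmem (pow_mem hAmem _)
    · rw [Subgroup.closure_le]
      rintro x hx
      rcases hx with h | h
      · rw [h]; exact hSamem
      · rw [h]; exact hSbmem
  have e : DihedralGroup 5 ≃* (Subgroup.closure {Sa, Sb} : Subgroup (GL (Fin 2) ℝ)) :=
    (MonoidHom.ofInjective hinj).trans (MulEquiv.subgroupCongr hrange)
  constructor
  · rw [Nat.card_congr e.toEquiv.symm, DihedralGroup.nat_card]
  · exact ⟨e.symm⟩
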